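/- Let $\zeta : C(M) \to \mathbb{R}$ be a symplectic quasi-state on a closed symplectic manifold $(M,\omega)$ satisfying the PB-inequality with constant $K$: $|\zeta(F+G) - \zeta(F) - \zeta(G)| \leq \sqrt{K\|\{F,G\}\|}$ for all $F, G$. Let $X, Y, Z$ be closed $\zeta$-superheavy subsets with $X \cap Y \cap Z = \emptyset$. Then for any smooth functions $F, G$ with $F|_X \leq 0$, $G|_Y \leq 0$, $(F+G)|_Z \geq 1$, one has $\|\{F,G\}\| \geq 1/K$; i.e. $pb_3(X,Y,Z) \geq 1/K$. -/
import Mathlib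


open Set

/-- The sup-norm (uniform norm) `‖f‖_∞ = sup_{x ∈ M} |f(x)|` of a function. -/
noncomputable def supNorm {M : Type*} (f : M → ℝ) : ℝ := ⨆ x, |f x|

/-- An abstract model of a symplectic manifold `M`, recording the predicate of being a
smooth function on `M` and the Poisson bracket `{·,·}` on smooth functions, together with
its basic algebraic properties (ℝ-bilinearity, antisymmetry, and the Leibniz rule). -/
structure PoissonManifold (M : Type*) [TopologicalSpace M] where
  /-- `IsSmooth f` means `f ∈ C^∞(M)`. -/
  IsSmooth : (M → ℝ) → Prop
  /-- The Poisson bracket `{f, g}` associated to the symplectic form. -/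
  bracket : (M → ℝ) → (M → ℝ) → M → ℝ
  isSmooth_continuous : ∀ {f}, IsSmooth f → Continuous f
  isSmooth_const : ∀ c : ℝ, IsSmooth (fun _ => c)
  isSmooth_add : ∀ {f g}, IsSmooth f → IsSmooth g → IsSmooth (f + g)
  isSmooth_mul : ∀ {f g}, IsSmooth f → IsSmooth g → IsSmooth (f * g)
  isSmooth_smul : ∀ (c : ℝ) {f}, IsSmooth f → IsSmooth (c • f)
  isSmooth_bracket : ∀ {f g}, IsSmooth f → IsSmooth g → IsSmooth (bracket f g)
  bracket_add_left : ∀ f g h, bracket (f + g) h = bracket f h + bracket g h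
  bracket_smul_left : ∀ (c : ℝ) f g, bracket (c • f) g = c • bracket f g
  bracket_antisymm : ∀ f g, bracket f g = - bracket g f
  bracket_leibniz : ∀ f g h, bracket (f * g) h = f * bracket g h + g * bracket f h

/-- A symplectic quasi-state on a closed symplectic manifold: a normalized, positive
functional on continuous functions which is linear on Poisson-commutative subspaces. -/
structure QuasiState {M : Type*} [TopologicalSpace M] (P : PoissonManifold M) where
  val : (M → ℝ) → ℝ
  normalized : val (fun _ => 1) = 1
  positive : ∀ F : M → ℝ, Continuous F → (∀ x, 0 ≤ F x) → 0 ≤ val F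
  monotone : ∀ F G : M → ℝ, Continuous F → Continuous G →
    (∀ x, F x ≤ G x) → val F ≤ val G
  quasi_additive : ∀ F G : M → ℝ, P.IsSmooth F → P.IsSmooth G →
    P.bracket F G = 0 → val (F + G) = val F + val G
  homogeneous : ∀ (c : ℝ) (F : M → ℝ), Continuous F → val (c • F) = c * val F

/-- A closed set `X` is superheavy for the quasi-state `ζ`: `ζ(F) ≥ c` whenever
`F ≥ c` on `X`, and `ζ(F) ≤ c` whenever `F ≤ c` on `X`. -/
def Superheavy {M : Type*} [TopologicalSpace M] {P : PoissonManifold M}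
    (zeta : QuasiState P) (X : Set M) : Prop :=
  (∀ (F : M → ℝ), Continuous F → ∀ c : ℝ, (∀ x ∈ X, c ≤ F x) → c ≤ zeta.val F) ∧
  (∀ (F : M → ℝ), Continuous F → ∀ c : ℝ, (∀ x ∈ X, F x ≤ c) → zeta.val F ≤ c)

/-- If a closed symplectic manifold admits a symplectic quasi-state `ζ`
satisfying the PB-inequality with constant `K`, and `X, Y, Z` are closed `ζ`-superheavy
sets with `X ∩ Y ∩ Z = ∅`, then any smooth `F, G` with `F ≤ 0` on `X`, `G ≤ 0` on `Y`,
`F + G ≥ 1` on `Z` satisfy `‖{F,G}‖_∞ ≥ 1/K`; i.e. `pb₃(X,Y,Z) ≥ 1/K`. -/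
theorem pb3_ge_of_superheavy_triple
    {M : Type*} [TopologicalSpace M] [CompactSpace M] (P : PoissonManifold M)
    (zeta : QuasiState P) (K : ℝ) (hK : 0 < K)
    (hPB : ∀ F G : M → ℝ, P.IsSmooth F → P.IsSmooth G →
      |zeta.val (F + G) - zeta.val F - zeta.val G|
        ≤ Real.sqrt (K * supNorm (P.bracket F G)))
    (X Y Z : Set M) (hX : IsClosed X) (hY : IsClosed Y) (hZ : IsClosed Z)
    (hXs : Superheavy zeta X) (hYs : Superheavy zeta Y) (hZs : Superheavy zeta Z)
    (hXYZ : X ∩ Y ∩ Z = ∅)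
    (F G : M → ℝ) (hF : P.IsSmooth F) (hG : P.IsSmooth G)
    (hFX : ∀ x ∈ X, F x ≤ 0) (hGY : ∀ x ∈ Y, G x ≤ 0)
    (hFGZ : ∀ x ∈ Z, 1 ≤ F x + G x) :
    1 / K ≤ supNorm (P.bracket F G) := by
  have hFc := P.isSmooth_continuous hF
  have hGc := P.isSmooth_continuous hG
  have h1 : zeta.val F ≤ 0 := hXs.2 F hFc 0 hFX
  have h2 : zeta.val G ≤ 0 := hYs.2 G hGc 0 hGY
  have h3 : (1:ℝ) ≤ zeta.val (F + G) :=
    hZs.1 (F + G) (hFc.add hGc) 1 hFGZ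
  have h4 : (1:ℝ) ≤ |zeta.val (F + G) - zeta.val F - zeta.val G| := by
    have : (1:ℝ) ≤ zeta.val (F + G) - zeta.val F - zeta.val G := by linarith
    exact le_trans this (le_abs_self _)
  have h5 : (1:ℝ) ≤ Real.sqrt (K * supNorm (P.bracket F G)) :=
    le_trans h4 (hPB F G hF hG)
  have hnn : (0:ℝ) ≤ K * supNorm (P.bracket F G) := by
    by_contra h
    push_neg at h
    rw [Real.sqrt_eq_zero_of_nonpos h.le] at h5; linarith
  have h6 : (1:ℝ) ≤ K * supNorm (P.bracket F G) := by
    nlinarith [Real.sq_sqrt hnn]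
  rw [div_le_iff₀ hK]
  linarith
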